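/- (Corollary 1, matrix representation) Under the hypotheses of Theorem 2 (spectra of A and S disjoint, S = T^{−1}ΣT with Σ = blkdiag(J(s_1,ν_1),…,J(s_d,ν_d)), E_i the block selectors), define 𝐇 := Σ_{i=1}^{d} Σ_{k=0}^{ν_i−1} (E_i (s_i I_ν − Σ^⊤)^k E_i) ⊗ η_k(s_i) ∈ ℂ^{pν×mν} and 𝐓_S := (T ⊗ I_p)^⊤ · 𝐇 · ((T ⊗ I_m)^⊤)^{−1} ∈ ℂ^{pν×mν}. Then for every M ∈ ℝ^{m×ν}, vec(T_S(M)) = 𝐓_S · vec(M), where vec stacks the columns of a matrix into a single vector. -/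

import Mathlib

open Matrix Kronecker

/-- The `r × r` Jordan block with eigenvalue `s`. -/
def jordanBlock (s : ℂ) (r : ℕ) : Matrix (Fin r) (Fin r) ℂ :=
  Matrix.of fun i j => if (i : ℕ) = (j : ℕ) then s
    else if (i : ℕ) + 1 = (j : ℕ) then 1 else 0

/-- The `k`-moment of `(A,B,C,D)` at `s`. -/
noncomputable def kMoment {n m p : ℕ}
    (A : Matrix (Fin n) (Fin n) ℝ) (B : Matrix (Fin n) (Fin m) ℝ)
    (C : Matrix (Fin p) (Fin n) ℝ) (D : Matrix (Fin p) (Fin m) ℝ)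
    (s : ℂ) (k : ℕ) : Matrix (Fin p) (Fin m) ℂ :=
  if k = 0 then
    C.map Complex.ofReal * (s • (1 : Matrix (Fin n) (Fin n) ℂ) - A.map Complex.ofReal)⁻¹ *
      B.map Complex.ofReal + D.map Complex.ofReal
  else
    C.map Complex.ofReal *
      ((s • (1 : Matrix (Fin n) (Fin n) ℂ) - A.map Complex.ofReal)⁻¹) ^ (k + 1) *
      B.map Complex.ofReal

/-- `_root_.vec` stacks the columns of a matrix into a single vector:
`_root_.vec(M) (j, i) = M i j`. -/
def _root_.vec {α β : Type*} (M : Matrix α β ℂ) : β × α → ℂ := fun x => M x.2 x.1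

/-! ### Auxiliary lemmas -/


lemma aux_map_mul {a b c : Type*} [Fintype b] (X : Matrix a b ℝ) (Y : Matrix b c ℝ) :
    (X * Y).map Complex.ofReal = X.map Complex.ofReal * Y.map Complex.ofReal := by
  ext i j
  simp [Matrix.mul_apply]

lemma aux_map_add {a b : Type*} (X Y : Matrix a b ℝ) :
    (X + Y).map Complex.ofReal = X.map Complex.ofReal + Y.map Complex.ofReal := by
  ext i j
  simp

lemma aux_vec_kron {α β α' β' : Type*} [Fintype α] [Fintype β] [Fintype α'] [Fintype β']
    (G : Matrix β' β ℂ) (H : Matrix α' α ℂ) (X : Matrix α β ℂ) :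
    (G ⊗ₖ H).mulVec (_root_.vec X) = _root_.vec (H * X * Gᵀ) := by
  funext x
  obtain ⟨b', a'⟩ := x
  simp only [Matrix.mulVec, dotProduct, _root_.vec, kroneckerMap_apply, Matrix.mul_apply,
    Fintype.sum_prod_type, Finset.sum_mul, Finset.mul_sum, transpose_apply]
  refine Finset.sum_congr rfl fun b _ => Finset.sum_congr rfl fun a _ => ?_
  ring

lemma aux_sum_mulVec {ι κ κ' : Type*} [Fintype κ] (t : Finset ι)
    (A : ι → Matrix κ' κ ℂ) (v : κ → ℂ) :
    (∑ i ∈ t, A i).mulVec v = ∑ i ∈ t, (A i).mulVec v := by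
  funext j
  simp only [Matrix.mulVec, dotProduct, Matrix.sum_apply, Finset.sum_mul, Finset.sum_apply]
  rw [Finset.sum_comm]

lemma aux_vec_sum {α β ι : Type*} (t : Finset ι) (X : ι → Matrix α β ℂ) :
    _root_.vec (∑ i ∈ t, X i) = ∑ i ∈ t, _root_.vec (X i) := by
  funext x
  simp [_root_.vec, Matrix.sum_apply, Finset.sum_apply]

lemma aux_jordan_entry (s : ℂ) (r : ℕ) (l j : Fin r) :
    (jordanBlock s r - s • 1) l j = if (l : ℕ) + 1 = (j : ℕ) then 1 else 0 := by
  simp only [Matrix.sub_apply, jordanBlock, Matrix.of_apply, Matrix.smul_apply,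
    Matrix.one_apply, smul_eq_mul, Fin.ext_iff]
  by_cases h : (l : ℕ) = (j : ℕ)
  · have h2 : ¬ ((l : ℕ) + 1 = (j : ℕ)) := by omega
    simp [h, h2]
  · simp [h]

lemma aux_jordan_pow (s : ℂ) (r : ℕ) (k : ℕ) :
    ∀ i j : Fin r, ((jordanBlock s r - s • 1) ^ k) i j
      = if (i : ℕ) + k = (j : ℕ) then 1 else 0 := by
  induction k with
  | zero =>
    intro i j
    simp [Matrix.one_apply, Fin.ext_iff]
  | succ k ih =>
    intro i j
    rw [pow_succ, Matrix.mul_apply]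
    by_cases h : (i : ℕ) + (k + 1) = (j : ℕ)
    · have hjr : (i : ℕ) + k < r := by omega
      rw [Finset.sum_eq_single (⟨(i : ℕ) + k, hjr⟩ : Fin r)]
      · rw [ih, aux_jordan_entry]
        have h2 : (i : ℕ) + k + 1 = (j : ℕ) := by omega
        simp [h2, h]
      · intro l _ hl
        rw [ih, aux_jordan_entry]
        by_cases h1 : (i : ℕ) + k = (l : ℕ)
        · exfalso; exact hl (by simp [Fin.ext_iff, ← h1])
        · simp [h1]
      · intro h'; exact absurd (Finset.mem_univ _) h'
    · rw [if_neg h]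
      apply Finset.sum_eq_zero
      intro l _
      rw [ih, aux_jordan_entry]
      by_cases h1 : (i : ℕ) + k = (l : ℕ) <;> by_cases h2 : (l : ℕ) + 1 = (j : ℕ) <;>
        simp [h1, h2] <;> omega

lemma aux_jordan_nilpotent (s : ℂ) (r : ℕ) : (jordanBlock s r - s • 1) ^ r = 0 := by
  ext i j
  rw [aux_jordan_pow]
  have : ¬ ((i : ℕ) + r = (j : ℕ)) := by omega
  simp [this]

lemma aux_unfold_rec {n : ℕ} {σ : Type*} [Fintype σ] [DecidableEq σ]
    (X Q : Matrix (Fin n) σ ℂ) (R : Matrix (Fin n) (Fin n) ℂ) (N : Matrix σ σ ℂ)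
    (h : X = Q - R * X * N) (K : ℕ) :
    X = (∑ k ∈ Finset.range K, ((-1 : ℂ) ^ k) • (R ^ k * Q * N ^ k))
      + ((-1 : ℂ) ^ K) • (R ^ K * X * N ^ K) := by
  induction K with
  | zero => simp
  | succ K ih =>
    rw [Finset.sum_range_succ]
    have key : ((-1 : ℂ) ^ K) • (R ^ K * X * N ^ K)
        = ((-1 : ℂ) ^ K) • (R ^ K * Q * N ^ K)
          + ((-1 : ℂ) ^ (K + 1)) • (R ^ (K + 1) * X * N ^ (K + 1)) := by
      nth_rewrite 1 [h]
      have e1 : R ^ K * (Q - R * X * N) * N ^ K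
          = R ^ K * Q * N ^ K - R ^ (K + 1) * X * N ^ (K + 1) := by
        rw [Matrix.mul_sub, Matrix.sub_mul, pow_succ, pow_succ']
        simp [Matrix.mul_assoc]
      rw [e1, smul_sub, sub_eq_add_neg]
      congr 1
      conv_rhs => rw [pow_succ, mul_comm, mul_smul, neg_one_smul]
    conv_lhs => rw [ih, key]
    rw [add_assoc]

section Blocks

variable {d : ℕ} (νs : Fin d → ℕ) (s : Fin d → ℂ)

/-- The block-selector diagonal matrix `E_i`. -/
abbrev auxE (i : Fin d) : Matrix ((j : Fin d) × Fin (νs j)) ((j : Fin d) × Fin (νs j)) ℂ :=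
  Matrix.diagonal (fun a => if a.1 = i then (1 : ℂ) else 0)

/-- The Jordan form `Σ`. -/
abbrev auxSig : Matrix ((j : Fin d) × Fin (νs j)) ((j : Fin d) × Fin (νs j)) ℂ :=
  Matrix.blockDiagonal' (fun j => jordanBlock (s j) (νs j))

lemma auxE_mul_self (i : Fin d) : auxE νs i * auxE νs i = auxE νs i := by
  unfold auxE
  rw [Matrix.diagonal_mul_diagonal]
  ext a b
  by_cases hab : a = b
  · subst hab
    by_cases h : a.1 = i <;> simp [Matrix.diagonal_apply, h]
  · simp [Matrix.diagonal_apply, hab]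

lemma auxE_sum : (∑ i : Fin d, auxE νs i) = 1 := by
  ext a b
  by_cases hab : a = b
  · subst hab
    simp [Matrix.sum_apply, Matrix.diagonal_apply, Matrix.one_apply]
  · simp [Matrix.sum_apply, Matrix.diagonal_apply, Matrix.one_apply, hab]

lemma auxE_comm_sig (i : Fin d) : auxE νs i * auxSig νs s = auxSig νs s * auxE νs i := by
  unfold auxE auxSig
  ext a b
  rw [Matrix.diagonal_mul, Matrix.mul_diagonal]
  by_cases hab : a.1 = b.1
  · rw [hab]
    ring
  · rw [Matrix.blockDiagonal'_apply, dif_neg hab]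
    ring

lemma auxE_zero (i : Fin d) (hν : νs i = 0) : auxE νs i = 0 := by
  unfold auxE
  ext a b
  rw [Matrix.diagonal_apply]
  by_cases hab : a = b
  · subst hab
    have h2 := a.2.2
    by_cases h : a.1 = i
    · have h3 : νs a.1 = 0 := by rw [h, hν]
      omega
    · simp [h]
  · simp [hab]

lemma aux_sub_smul_one (i₀ : Fin d) : auxSig νs s - (s i₀ : ℂ) • 1
    = Matrix.blockDiagonal' (fun j => jordanBlock (s j) (νs j) - s i₀ • 1) := by
  unfold auxSig
  have h1 : (fun j => (s i₀ • 1 : Matrix (Fin (νs j)) (Fin (νs j)) ℂ))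
      = s i₀ • (1 : ∀ j, Matrix (Fin (νs j)) (Fin (νs j)) ℂ) := rfl
  have h2 : (fun j => jordanBlock (s j) (νs j) - s i₀ • 1)
      = (fun j => jordanBlock (s j) (νs j))
        - (fun j => (s i₀ • 1 : Matrix (Fin (νs j)) (Fin (νs j)) ℂ)) := rfl
  rw [h2, Matrix.blockDiagonal'_sub, h1, Matrix.blockDiagonal'_smul, Matrix.blockDiagonal'_one]

lemma aux_nil_mul_E (i : Fin d) :
    (auxSig νs s - s i • 1) ^ (νs i) * auxE νs i = 0 := by
  rw [aux_sub_smul_one νs s i, ← Matrix.blockDiagonal'_pow]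
  unfold auxE
  ext a b
  rw [Matrix.mul_diagonal]
  by_cases hb : b.1 = i
  · rw [Matrix.blockDiagonal'_apply]
    by_cases hab : a.1 = b.1
    · rw [dif_pos hab]
      have hai : a.1 = i := hab.trans hb
      subst hai
      simp [Pi.pow_apply, aux_jordan_nilpotent]
    · rw [dif_neg hab]; simp
  · simp [hb]

lemma auxE_commW (i : Fin d) :
    Commute (auxE νs i) (auxSig νs s - s i • 1) := by
  show _ * _ = _ * _
  rw [Matrix.mul_sub, Matrix.sub_mul, auxE_comm_sig]
  congr 1
  rw [Matrix.mul_smul, Matrix.mul_one, Matrix.smul_mul, Matrix.one_mul]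

lemma aux_GT (i : Fin d) (k : ℕ) :
    (auxE νs i * (s i • 1 - (auxSig νs s)ᵀ) ^ k * auxE νs i)ᵀ
      = ((-1 : ℂ) ^ k) • ((auxSig νs s - s i • 1) ^ k * auxE νs i) := by
  simp only [Matrix.transpose_mul, Matrix.diagonal_transpose, Matrix.transpose_pow,
    Matrix.transpose_sub, Matrix.transpose_smul, Matrix.transpose_one,
    Matrix.transpose_transpose]
  have h2 : (s i • (1 : Matrix ((j : Fin d) × Fin (νs j)) ((j : Fin d) × Fin (νs j)) ℂ)
      - auxSig νs s) = (-1 : ℂ) • (auxSig νs s - s i • 1) := by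
    rw [neg_one_smul, neg_sub]
  rw [h2, smul_pow, Matrix.smul_mul, Matrix.mul_smul]
  congr 1
  calc auxE νs i * ((auxSig νs s - s i • 1) ^ k * auxE νs i)
      = (auxE νs i * (auxSig νs s - s i • 1) ^ k) * auxE νs i := by rw [Matrix.mul_assoc]
    _ = ((auxSig νs s - s i • 1) ^ k * auxE νs i) * auxE νs i := by
        rw [((auxE_commW νs s i).pow_right k).eq]
    _ = (auxSig νs s - s i • 1) ^ k * (auxE νs i * auxE νs i) := by rw [Matrix.mul_assoc]
    _ = (auxSig νs s - s i • 1) ^ k * auxE νs i := by rw [auxE_mul_self]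

lemma aux_spec (Sc T : Matrix ((j : Fin d) × Fin (νs j)) ((j : Fin d) × Fin (νs j)) ℂ)
    (hT : IsUnit T.det) (hJordan : Sc = T⁻¹ * auxSig νs s * T)
    (i : Fin d) (hν : 0 < νs i) : s i ∈ spectrum ℂ Sc := by
  rw [spectrum.mem_iff, Algebra.algebraMap_eq_smul_one]
  intro hu
  have hTT : T * T⁻¹ = 1 := Matrix.mul_nonsing_inv T hT
  have hXfer : T * (s i • 1 - Sc) * T⁻¹
      = s i • (1 : Matrix ((j : Fin d) × Fin (νs j)) ((j : Fin d) × Fin (νs j)) ℂ)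
        - auxSig νs s := by
    rw [hJordan, Matrix.mul_sub, Matrix.sub_mul]
    congr 1
    · rw [Matrix.mul_smul, Matrix.mul_one, Matrix.smul_mul, hTT]
    · calc T * (T⁻¹ * auxSig νs s * T) * T⁻¹
          = T * (T⁻¹ * (auxSig νs s * (T * T⁻¹))) := by simp only [Matrix.mul_assoc]
        _ = T * (T⁻¹ * auxSig νs s) := by rw [hTT, Matrix.mul_one]
        _ = (T * T⁻¹) * auxSig νs s := by rw [Matrix.mul_assoc]
        _ = auxSig νs s := by rw [hTT, Matrix.one_mul]
  have hXu : IsUnit (s i • (1 : Matrix ((j : Fin d) × Fin (νs j))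
      ((j : Fin d) × Fin (νs j)) ℂ) - auxSig νs s) := by
    rw [← hXfer]
    exact (((Matrix.isUnit_iff_isUnit_det T).2 hT).mul hu).mul
      ((Matrix.isUnit_iff_isUnit_det T⁻¹).2 (Matrix.isUnit_nonsing_inv_det T hT))
  have hWu : IsUnit ((auxSig νs s - s i • 1) ^ (νs i)) := by
    have h3 : auxSig νs s - s i • 1 = -(s i • 1 - auxSig νs s) := by rw [neg_sub]
    rw [h3]
    exact hXu.neg.pow _
  have h0 := aux_nil_mul_E νs s i
  have hdet := (Matrix.isUnit_iff_isUnit_det _).1 hWu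
  have hE0 : auxE νs i = 0 := by
    calc auxE νs i = 1 * auxE νs i := (Matrix.one_mul _).symm
      _ = (((auxSig νs s - s i • 1) ^ (νs i))⁻¹ * ((auxSig νs s - s i • 1) ^ (νs i)))
            * auxE νs i := by rw [Matrix.nonsing_inv_mul _ hdet]
      _ = ((auxSig νs s - s i • 1) ^ (νs i))⁻¹
            * (((auxSig νs s - s i • 1) ^ (νs i)) * auxE νs i) := by rw [Matrix.mul_assoc]
      _ = 0 := by rw [h0, Matrix.mul_zero]
  have h1 := congrFun (congrFun hE0 ⟨i, ⟨0, hν⟩⟩) ⟨i, ⟨0, hν⟩⟩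
  simp [Matrix.diagonal_apply] at h1

lemma aux_main {n m p : ℕ}
    (Ac : Matrix (Fin n) (Fin n) ℂ) (Bc : Matrix (Fin n) (Fin m) ℂ)
    (Cc : Matrix (Fin p) (Fin n) ℂ) (Dc : Matrix (Fin p) (Fin m) ℂ)
    (Mt : Matrix (Fin m) ((j : Fin d) × Fin (νs j)) ℂ)
    (Pt : Matrix (Fin n) ((j : Fin d) × Fin (νs j)) ℂ)
    (hAunit : ∀ i : Fin d, 0 < νs i →
      IsUnit (s i • (1 : Matrix (Fin n) (Fin n) ℂ) - Ac).det)
    (hsyl : Pt * auxSig νs s = Ac * Pt + Bc * Mt) :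
    Cc * Pt + Dc * Mt = ∑ i : Fin d, ∑ k ∈ Finset.range (νs i),
      ((-1 : ℂ) ^ k) •
        ((if k = 0 then Cc * (s i • 1 - Ac)⁻¹ * Bc + Dc
            else Cc * ((s i • 1 - Ac)⁻¹) ^ (k + 1) * Bc)
          * Mt * ((auxSig νs s - s i • 1) ^ k * auxE νs i)) := by
  have hkey : ∀ i : Fin d,
      Cc * (Pt * auxE νs i) + Dc * (Mt * auxE νs i)
        = ∑ k ∈ Finset.range (νs i),
            ((-1 : ℂ) ^ k) •
              ((if k = 0 then Cc * (s i • 1 - Ac)⁻¹ * Bc + Dc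
                  else Cc * ((s i • 1 - Ac)⁻¹) ^ (k + 1) * Bc)
                * Mt * ((auxSig νs s - s i • 1) ^ k * auxE νs i)) := by
    intro i
    rcases Nat.eq_zero_or_pos (νs i) with hν | hν
    · rw [hν, auxE_zero νs i hν]
      simp
    · have hEE : auxE νs i * auxE νs i = auxE νs i := auxE_mul_self νs i
      have hcW := auxE_commW νs s i
      have hcWk : ∀ k : ℕ, auxE νs i * (auxSig νs s - s i • 1) ^ k
          = (auxSig νs s - s i • 1) ^ k * auxE νs i := fun k => (hcW.pow_right k).eq
      have hRA : (s i • (1 : Matrix (Fin n) (Fin n) ℂ) - Ac)⁻¹ * (s i • 1 - Ac) = 1 :=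
        Matrix.nonsing_inv_mul _ (hAunit i hν)
      set W := auxSig νs s - s i • 1 with hW
      set Ei := auxE νs i with hEidef
      set Ri := (s i • (1 : Matrix (Fin n) (Fin n) ℂ) - Ac)⁻¹ with hRidef
      have hENk : ∀ k : ℕ, Ei * (W * Ei) ^ k = W ^ k * Ei := by
        intro k
        induction k with
        | zero => simp
        | succ k ih =>
          calc Ei * (W * Ei) ^ (k + 1) = Ei * ((W * Ei) ^ k * (W * Ei)) := by rw [pow_succ]
            _ = (Ei * (W * Ei) ^ k) * (W * Ei) := by rw [Matrix.mul_assoc]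
            _ = (W ^ k * Ei) * (W * Ei) := by rw [ih]
            _ = W ^ k * ((Ei * W) * Ei) := by simp only [Matrix.mul_assoc]
            _ = W ^ k * ((W * Ei) * Ei) := by rw [hcW.eq]
            _ = W ^ k * (W * (Ei * Ei)) := by rw [Matrix.mul_assoc]
            _ = W ^ k * (W * Ei) := by rw [hEE]
            _ = (W ^ k * W) * Ei := by rw [Matrix.mul_assoc]
            _ = W ^ (k + 1) * Ei := by rw [pow_succ]
      have hNpow : ∀ k : ℕ, (W * Ei) ^ (k + 1) = W ^ (k + 1) * Ei := by
        intro k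
        calc (W * Ei) ^ (k + 1) = (W * Ei) * (W * Ei) ^ k := by rw [pow_succ']
          _ = W * (Ei * (W * Ei) ^ k) := by rw [Matrix.mul_assoc]
          _ = W * (W ^ k * Ei) := by rw [hENk]
          _ = (W * W ^ k) * Ei := by rw [Matrix.mul_assoc]
          _ = W ^ (k + 1) * Ei := by rw [← pow_succ']
      have hstep : (s i • (1 : Matrix (Fin n) (Fin n) ℂ) - Ac) * (Pt * Ei)
          = Bc * (Mt * Ei) - (Pt * Ei) * (W * Ei) := by
        have e1 : (Pt * Ei) * (W * Ei) = Pt * (W * Ei) := by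
          calc (Pt * Ei) * (W * Ei) = Pt * ((Ei * W) * Ei) := by simp only [Matrix.mul_assoc]
            _ = Pt * ((W * Ei) * Ei) := by rw [hcW.eq]
            _ = Pt * (W * (Ei * Ei)) := by rw [Matrix.mul_assoc]
            _ = Pt * (W * Ei) := by rw [hEE]
        have e2 : Pt * (W * Ei) = (Pt * auxSig νs s) * Ei - s i • (Pt * Ei) := by
          rw [hW, Matrix.sub_mul, Matrix.mul_sub]
          congr 1
          · rw [Matrix.mul_assoc]
          · rw [Matrix.smul_mul, Matrix.one_mul, Matrix.mul_smul]
        rw [e1, e2, hsyl, Matrix.add_mul, Matrix.sub_mul, Matrix.smul_mul, Matrix.one_mul]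
        simp only [Matrix.mul_assoc]
        abel
      have hXrec : Pt * Ei = (Ri * (Bc * (Mt * Ei))) - Ri * (Pt * Ei) * (W * Ei) := by
        have h2 := congrArg (fun X => Ri * X) hstep
        rw [← Matrix.mul_assoc, hRA, Matrix.one_mul, Matrix.mul_sub] at h2
        rw [Matrix.mul_assoc]
        exact h2
      have hunfold := aux_unfold_rec (Pt * Ei) (Ri * (Bc * (Mt * Ei))) Ri (W * Ei) hXrec (νs i)
      obtain ⟨K, hK⟩ : ∃ K, νs i = K + 1 := ⟨νs i - 1, by omega⟩
      have hres : (W * Ei) ^ (νs i) = 0 := by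
        rw [hK, hNpow, ← hK]
        exact aux_nil_mul_E νs s i
      rw [hres, Matrix.mul_zero, smul_zero, add_zero] at hunfold
      have hterm : ∀ k : ℕ,
          ((-1 : ℂ) ^ k) •
              ((if k = 0 then Cc * Ri * Bc + Dc else Cc * Ri ^ (k + 1) * Bc)
                * Mt * (W ^ k * Ei))
            = ((-1 : ℂ) ^ k) • (Cc * (Ri ^ k * (Ri * (Bc * (Mt * Ei))) * (W * Ei) ^ k))
              + (if k = 0 then Dc * (Mt * Ei) else 0) := by
        intro k
        match k with
        | 0 =>
          simp only [↓reduceIte, pow_zero, one_smul, Matrix.one_mul, Matrix.mul_one]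
          rw [Matrix.add_mul, Matrix.add_mul]
          simp only [Matrix.mul_assoc]
        | (k + 1) =>
          have hk0 : (k + 1 : ℕ) ≠ 0 := Nat.succ_ne_zero k
          rw [if_neg hk0, if_neg hk0, add_zero]
          congr 1
          rw [pow_succ Ri (k + 1)]
          simp only [Matrix.mul_assoc]
          rw [hENk]
      calc Cc * (Pt * Ei) + Dc * (Mt * Ei)
          = (∑ k ∈ Finset.range (νs i),
              ((-1 : ℂ) ^ k) • (Cc * (Ri ^ k * (Ri * (Bc * (Mt * Ei))) * (W * Ei) ^ k)))
            + Dc * (Mt * Ei) := by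
            rw [hunfold, Matrix.mul_sum]
            congr 1
            refine Finset.sum_congr rfl fun k _ => ?_
            rw [Matrix.mul_smul]
        _ = ∑ k ∈ Finset.range (νs i),
              (((-1 : ℂ) ^ k) • (Cc * (Ri ^ k * (Ri * (Bc * (Mt * Ei))) * (W * Ei) ^ k))
                + (if k = 0 then Dc * (Mt * Ei) else 0)) := by
            rw [Finset.sum_add_distrib]
            congr 1
            rw [Finset.sum_ite_eq' (Finset.range (νs i)) 0 (fun _ => Dc * (Mt * Ei))]
            rw [if_pos (Finset.mem_range.mpr hν)]
        _ = ∑ k ∈ Finset.range (νs i),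
              ((-1 : ℂ) ^ k) •
                ((if k = 0 then Cc * Ri * Bc + Dc else Cc * Ri ^ (k + 1) * Bc)
                  * Mt * (W ^ k * Ei)) :=
            Finset.sum_congr rfl fun k _ => (hterm k).symm
  calc Cc * Pt + Dc * Mt
      = Cc * (Pt * ∑ i : Fin d, auxE νs i) + Dc * (Mt * ∑ i : Fin d, auxE νs i) := by
        rw [auxE_sum, Matrix.mul_one, Matrix.mul_one]
    _ = ∑ i : Fin d, (Cc * (Pt * auxE νs i) + Dc * (Mt * auxE νs i)) := by
        rw [Matrix.mul_sum, Matrix.mul_sum, Matrix.mul_sum, Matrix.mul_sum,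
          ← Finset.sum_add_distrib]
    _ = _ := Finset.sum_congr rfl fun i _ => hkey i

end Blocks

/-- **Corollary 1.** Under the hypotheses of Theorem 2, with
`𝐇 = Σ_i Σ_k (E_i (s_i I - Σᵀ)^k E_i) ⊗ η_k(s_i)` and
`𝐓_S = (T ⊗ I_p)ᵀ 𝐇 ((T ⊗ I_m)ᵀ)⁻¹`, for every `M ∈ ℝ^{m×ν}` with `Π_M S = AΠ_M + BM`
one has `_root_.vec(T_S(M)) = 𝐓_S _root_.vec(M)`. -/
theorem moment_transfer_operator_matrix_representation
    (n m p d : ℕ) (νs : Fin d → ℕ) (s : Fin d → ℂ)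
    (A : Matrix (Fin n) (Fin n) ℝ) (B : Matrix (Fin n) (Fin m) ℝ)
    (C : Matrix (Fin p) (Fin n) ℝ) (D : Matrix (Fin p) (Fin m) ℝ)
    (S : Matrix ((i : Fin d) × Fin (νs i)) ((i : Fin d) × Fin (νs i)) ℝ)
    (hdisj : ∀ μ : ℂ, ¬(μ ∈ spectrum ℂ (A.map Complex.ofReal) ∧
      μ ∈ spectrum ℂ (S.map Complex.ofReal)))
    (T : Matrix ((i : Fin d) × Fin (νs i)) ((i : Fin d) × Fin (νs i)) ℂ)
    (hT : IsUnit T.det)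
    (hJordan : S.map Complex.ofReal =
      T⁻¹ * Matrix.blockDiagonal' (fun i => jordanBlock (s i) (νs i)) * T)
    (M : Matrix (Fin m) ((i : Fin d) × Fin (νs i)) ℝ)
    (PiM : Matrix (Fin n) ((i : Fin d) × Fin (νs i)) ℝ)
    (hPiM : PiM * S = A * PiM + B * M) :
    _root_.vec ((C * PiM + D * M).map Complex.ofReal) =
      ((T ⊗ₖ (1 : Matrix (Fin p) (Fin p) ℂ))ᵀ *
        (∑ i : Fin d, ∑ k ∈ Finset.range (νs i),
          (Matrix.diagonal (fun a : (i : Fin d) × Fin (νs i) =>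
              if a.1 = i then (1 : ℂ) else 0) *
            ((s i) • (1 : Matrix ((i : Fin d) × Fin (νs i)) ((i : Fin d) × Fin (νs i)) ℂ) -
              (Matrix.blockDiagonal' (fun j => jordanBlock (s j) (νs j)))ᵀ) ^ k *
            Matrix.diagonal (fun a : (i : Fin d) × Fin (νs i) =>
              if a.1 = i then (1 : ℂ) else 0)) ⊗ₖ kMoment A B C D (s i) k) *
        ((T ⊗ₖ (1 : Matrix (Fin m) (Fin m) ℂ))ᵀ)⁻¹).mulVec
          (_root_.vec (M.map Complex.ofReal)) := by
  have hTT : T * T⁻¹ = 1 := Matrix.mul_nonsing_inv T hT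
  have hTT' : T⁻¹ * T = 1 := Matrix.nonsing_inv_mul T hT
  have hAunit : ∀ i : Fin d, 0 < νs i →
      IsUnit (s i • (1 : Matrix (Fin n) (Fin n) ℂ) - A.map Complex.ofReal).det := by
    intro i hν
    have h2 : s i ∉ spectrum ℂ (A.map Complex.ofReal) := fun hmem =>
      hdisj (s i) ⟨hmem, aux_spec νs s _ T hT hJordan i hν⟩
    rw [spectrum.mem_iff, not_not, Algebra.algebraMap_eq_smul_one] at h2
    exact (Matrix.isUnit_iff_isUnit_det _).1 h2
  have hPiMc : PiM.map Complex.ofReal * S.map Complex.ofReal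
      = A.map Complex.ofReal * PiM.map Complex.ofReal
        + B.map Complex.ofReal * M.map Complex.ofReal := by
    rw [← aux_map_mul, ← aux_map_mul, ← aux_map_mul, ← aux_map_add, hPiM]
  have hsyl : (PiM.map Complex.ofReal * T⁻¹) * auxSig νs s
      = A.map Complex.ofReal * (PiM.map Complex.ofReal * T⁻¹)
        + B.map Complex.ofReal * (M.map Complex.ofReal * T⁻¹) := by
    calc (PiM.map Complex.ofReal * T⁻¹) * auxSig νs s
        = PiM.map Complex.ofReal * T⁻¹ * auxSig νs s * (T * T⁻¹) := by
          rw [hTT, Matrix.mul_one]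
      _ = PiM.map Complex.ofReal * (T⁻¹ * auxSig νs s * T) * T⁻¹ := by
          simp only [Matrix.mul_assoc]
      _ = PiM.map Complex.ofReal * S.map Complex.ofReal * T⁻¹ := by rw [← hJordan]
      _ = (A.map Complex.ofReal * PiM.map Complex.ofReal
            + B.map Complex.ofReal * M.map Complex.ofReal) * T⁻¹ := by rw [hPiMc]
      _ = _ := by rw [Matrix.add_mul, Matrix.mul_assoc, Matrix.mul_assoc]
  have hmain := aux_main νs s (A.map Complex.ofReal) (B.map Complex.ofReal)
      (C.map Complex.ofReal) (D.map Complex.ofReal)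
      (M.map Complex.ofReal * T⁻¹) (PiM.map Complex.ofReal * T⁻¹) hAunit hsyl
  have hfold : ∀ (i : Fin d) (k : ℕ),
      (if k = 0
        then C.map Complex.ofReal
            * (s i • (1 : Matrix (Fin n) (Fin n) ℂ) - A.map Complex.ofReal)⁻¹
            * B.map Complex.ofReal + D.map Complex.ofReal
        else C.map Complex.ofReal
            * ((s i • (1 : Matrix (Fin n) (Fin n) ℂ) - A.map Complex.ofReal)⁻¹) ^ (k + 1)
            * B.map Complex.ofReal) = kMoment A B C D (s i) k := by
    intro i k
    rw [kMoment]
  simp only [hfold] at hmain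
  -- kronecker simplifications
  have hkron1 : ((T ⊗ₖ (1 : Matrix (Fin p) (Fin p) ℂ))ᵀ)
      = Tᵀ ⊗ₖ (1 : Matrix (Fin p) (Fin p) ℂ) := by
    rw [← Matrix.kroneckerMap_transpose, Matrix.transpose_one]
  have hkron2 : ((T ⊗ₖ (1 : Matrix (Fin m) (Fin m) ℂ))ᵀ)
      = Tᵀ ⊗ₖ (1 : Matrix (Fin m) (Fin m) ℂ) := by
    rw [← Matrix.kroneckerMap_transpose, Matrix.transpose_one]
  have hkroninv : ((T ⊗ₖ (1 : Matrix (Fin m) (Fin m) ℂ))ᵀ)⁻¹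
      = (T⁻¹)ᵀ ⊗ₖ (1 : Matrix (Fin m) (Fin m) ℂ) := by
    rw [hkron2]
    apply Matrix.inv_eq_right_inv
    rw [← Matrix.mul_kronecker_mul, Matrix.one_mul, ← Matrix.transpose_mul, hTT',
      Matrix.transpose_one, Matrix.one_kronecker_one]
  rw [hkron1, hkroninv, ← Matrix.mulVec_mulVec, ← Matrix.mulVec_mulVec]
  rw [aux_vec_kron ((T⁻¹)ᵀ) (1 : Matrix (Fin m) (Fin m) ℂ) (M.map Complex.ofReal)]
  rw [Matrix.one_mul, Matrix.transpose_transpose]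
  -- the middle factor
  have hH : (∑ i : Fin d, ∑ k ∈ Finset.range (νs i),
        (Matrix.diagonal (fun a : (i : Fin d) × Fin (νs i) =>
            if a.1 = i then (1 : ℂ) else 0) *
          ((s i) • (1 : Matrix ((i : Fin d) × Fin (νs i)) ((i : Fin d) × Fin (νs i)) ℂ) -
            (Matrix.blockDiagonal' (fun j => jordanBlock (s j) (νs j)))ᵀ) ^ k *
          Matrix.diagonal (fun a : (i : Fin d) × Fin (νs i) =>
            if a.1 = i then (1 : ℂ) else 0)) ⊗ₖ kMoment A B C D (s i) k).mulVec
        (_root_.vec (M.map Complex.ofReal * T⁻¹))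
      = _root_.vec (C.map Complex.ofReal * (PiM.map Complex.ofReal * T⁻¹)
          + D.map Complex.ofReal * (M.map Complex.ofReal * T⁻¹)) := by
    rw [aux_sum_mulVec]
    calc ∑ i : Fin d, (∑ k ∈ Finset.range (νs i),
            (auxE νs i * (s i • 1 - (auxSig νs s)ᵀ) ^ k * auxE νs i)
              ⊗ₖ kMoment A B C D (s i) k).mulVec (_root_.vec (M.map Complex.ofReal * T⁻¹))
        = ∑ i : Fin d, ∑ k ∈ Finset.range (νs i),
            ((auxE νs i * (s i • 1 - (auxSig νs s)ᵀ) ^ k * auxE νs i)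
              ⊗ₖ kMoment A B C D (s i) k).mulVec (_root_.vec (M.map Complex.ofReal * T⁻¹)) :=
          Finset.sum_congr rfl fun i _ => aux_sum_mulVec _ _ _
      _ = ∑ i : Fin d, ∑ k ∈ Finset.range (νs i),
            _root_.vec (((-1 : ℂ) ^ k) • (kMoment A B C D (s i) k
              * (M.map Complex.ofReal * T⁻¹)
              * ((auxSig νs s - s i • 1) ^ k * auxE νs i))) := by
          refine Finset.sum_congr rfl fun i _ => Finset.sum_congr rfl fun k _ => ?_
          rw [aux_vec_kron, aux_GT, Matrix.mul_smul]
      _ = _root_.vec (∑ i : Fin d, ∑ k ∈ Finset.range (νs i),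
            ((-1 : ℂ) ^ k) • (kMoment A B C D (s i) k
              * (M.map Complex.ofReal * T⁻¹)
              * ((auxSig νs s - s i • 1) ^ k * auxE νs i))) := by
          rw [aux_vec_sum]
          exact Finset.sum_congr rfl fun i _ => (aux_vec_sum _ _).symm
      _ = _root_.vec (C.map Complex.ofReal * (PiM.map Complex.ofReal * T⁻¹)
          + D.map Complex.ofReal * (M.map Complex.ofReal * T⁻¹)) := by rw [← hmain]
  rw [hH]
  rw [aux_vec_kron Tᵀ (1 : Matrix (Fin p) (Fin p) ℂ) _]
  rw [Matrix.one_mul, Matrix.transpose_transpose]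
  have hfin : (C.map Complex.ofReal * (PiM.map Complex.ofReal * T⁻¹)
      + D.map Complex.ofReal * (M.map Complex.ofReal * T⁻¹)) * T
      = (C * PiM + D * M).map Complex.ofReal := by
    rw [aux_map_add, aux_map_mul, aux_map_mul, Matrix.add_mul]
    congr 1
    · calc C.map Complex.ofReal * (PiM.map Complex.ofReal * T⁻¹) * T
          = C.map Complex.ofReal * (PiM.map Complex.ofReal * (T⁻¹ * T)) := by
            simp only [Matrix.mul_assoc]
        _ = C.map Complex.ofReal * PiM.map Complex.ofReal := by
            rw [hTT', Matrix.mul_one]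
    · calc D.map Complex.ofReal * (M.map Complex.ofReal * T⁻¹) * T
          = D.map Complex.ofReal * (M.map Complex.ofReal * (T⁻¹ * T)) := by
            simp only [Matrix.mul_assoc]
        _ = D.map Complex.ofReal * M.map Complex.ofReal := by
            rw [hTT', Matrix.mul_one]
  rw [hfin]
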